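/- The relative entropy H(μ,π) = sup_{V∈C(X)} (∫V dμ - log ∫ e^V dπ) between two probability measures on a compact metric space is finite if and only if μ is absolutely continuous with respect to π with density ψ = dμ/dπ satisfying log ψ ∈ L¹(μ), in which case H(μ,π) = ∫ log ψ dμ = ∫ ψ log ψ dπ. -/

import Mathlib

open MeasureTheory Filter Topology
set_option linter.unusedSectionVars false
set_option maxHeartbeats 1000000

section C
variable {X : Type*} [MetricSpace X] [CompactSpace X] [MeasurableSpace X] [BorelSpace X]
variable (μ π : Measure X) [IsProbabilityMeasure μ] [IsProbabilityMeasure π]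

noncomputable def dvF (μ π : Measure X) (V : X → ℝ) : ℝ :=
  (∫ x, V x ∂μ) - Real.log (∫ x, Real.exp (V x) ∂π)

lemma integrable_of_bdd {ν : Measure X} [IsFiniteMeasure ν] {f : X → ℝ}
    (hf : AEStronglyMeasurable f ν) {C : ℝ} (hC : ∀ x, |f x| ≤ C) :
    Integrable f ν :=
  (integrable_const C).mono' hf (ae_of_all _ fun x => by
    simpa [Real.norm_eq_abs] using hC x)

lemma integrable_exp_of_bdd {ν : Measure X} [IsFiniteMeasure ν] {V : X → ℝ}
    (hm : AEStronglyMeasurable V ν) {M : ℝ} (hb : ∀ x, |V x| ≤ M) :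
    Integrable (fun x => Real.exp (V x)) ν := by
  apply integrable_of_bdd (Real.continuous_exp.comp_aestronglyMeasurable hm)
    (C := Real.exp M)
  intro x
  rw [abs_of_nonneg (Real.exp_pos _).le]
  exact Real.exp_le_exp.2 ((abs_le.1 (hb x)).2)

lemma exp_int_ge {V : X → ℝ} (hm : AEStronglyMeasurable V π) {M : ℝ}
    (hb : ∀ x, |V x| ≤ M) :
    Real.exp (-M) ≤ ∫ x, Real.exp (V x) ∂π := by
  have h := integral_mono (integrable_const (Real.exp (-M)))
    (integrable_exp_of_bdd hm hb)
    (fun x => Real.exp_le_exp.2 (neg_le_of_abs_le (hb x)))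
  simpa using h


lemma clamp_abs_sub {a b M : ℝ} (hb : |b| ≤ M) :
    |max (min a M) (-M) - b| ≤ |a - b| := by
  rw [abs_le] at hb
  rcases le_total a M with h1 | h1
  · rcases le_total a (-M) with h2 | h2
    · rw [min_eq_left h1, max_eq_right h2]
      rw [abs_sub_comm, abs_of_nonneg (by linarith), abs_sub_comm,
        abs_of_nonneg (by linarith)]
      linarith
    · rw [min_eq_left h1, max_eq_left h2]
  · rw [min_eq_right h1, max_eq_left (by linarith)]
    rw [abs_of_nonneg (by linarith), abs_of_nonneg (by linarith)]
    linarith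

lemma exp_sub_exp_abs' {u v M : ℝ} (hu : u ≤ M) (hv : v ≤ M) (huv : v ≤ u) :
    Real.exp u - Real.exp v ≤ Real.exp M * (u - v) := by
  have h1 : Real.exp u - Real.exp v = Real.exp v * (Real.exp (u - v) - 1) := by
    rw [mul_sub, ← Real.exp_add]; ring_nf
  have h2 : Real.exp (u - v) - 1 ≤ (u - v) * Real.exp (u - v) := by
    have := Real.add_one_le_exp (-(u - v))
    have h3 : (1 - (u - v)) * Real.exp (u - v) ≤ 1 := by
      have := mul_le_mul_of_nonneg_right this (Real.exp_pos (u - v)).le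
      rw [← Real.exp_add, neg_add_cancel, Real.exp_zero] at this
      linarith
    nlinarith [Real.exp_pos (u - v)]
  calc Real.exp u - Real.exp v ≤ Real.exp v * ((u - v) * Real.exp (u - v)) := by
        rw [h1]; exact mul_le_mul_of_nonneg_left h2 (Real.exp_pos v).le
    _ = (u - v) * (Real.exp v * Real.exp (u-v)) := by ring
    _ = (u - v) * Real.exp u := by rw [← Real.exp_add]; ring_nf
    _ ≤ Real.exp M * (u - v) := by
        rw [mul_comm]
        exact mul_le_mul_of_nonneg_right (Real.exp_le_exp.2 hu) (by linarith)

lemma exp_sub_exp_abs {u v M : ℝ} (hu : u ≤ M) (hv : v ≤ M) :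
    |Real.exp u - Real.exp v| ≤ Real.exp M * |u - v| := by
  rcases le_total v u with h | h
  · rw [abs_of_nonneg (by simp [Real.exp_le_exp, h]), abs_of_nonneg (by linarith)]
    exact exp_sub_exp_abs' hu hv h
  · rw [abs_sub_comm, abs_of_nonneg (by simp [Real.exp_le_exp, h]), abs_sub_comm,
      abs_of_nonneg (by linarith)]
    exact exp_sub_exp_abs' hv hu h

lemma log_sub_log_abs' {s t c : ℝ} (hc : 0 < c) (hs : c ≤ s) (ht : c ≤ t) (hts : t ≤ s) :
    Real.log s - Real.log t ≤ (s - t) / c := by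
  have hs0 : 0 < s := lt_of_lt_of_le hc hs
  have ht0 : 0 < t := lt_of_lt_of_le hc ht
  have h1 : Real.log s - Real.log t = Real.log (s / t) := (Real.log_div hs0.ne' ht0.ne').symm
  have h2 : Real.log (s / t) ≤ s / t - 1 := Real.log_le_sub_one_of_pos (by positivity)
  have h3 : s / t - 1 = (s - t) / t := by field_simp
  have h4 : (s - t) / t ≤ (s - t) / c := by
    apply div_le_div_of_nonneg_left (by linarith) hc ht
  linarith

lemma log_sub_log_abs {s t c : ℝ} (hc : 0 < c) (hs : c ≤ s) (ht : c ≤ t) :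
    |Real.log s - Real.log t| ≤ |s - t| / c := by
  rcases le_total t s with h | h
  · rw [abs_of_nonneg (by linarith [Real.log_le_log (lt_of_lt_of_le hc ht) h] :
      (0:ℝ) ≤ Real.log s - Real.log t), abs_of_nonneg (by linarith)]
    exact log_sub_log_abs' hc hs ht h
  · rw [abs_sub_comm, abs_sub_comm s t,
      abs_of_nonneg (by linarith [Real.log_le_log (lt_of_lt_of_le hc hs) h] :
      (0:ℝ) ≤ Real.log t - Real.log s), abs_of_nonneg (by linarith)]
    exact log_sub_log_abs' hc ht hs h

lemma coe_dvF_le_sup {V : X → ℝ} (hm : Measurable V) {M : ℝ} (hM : 0 ≤ M)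
    (hb : ∀ x, |V x| ≤ M) :
    ((dvF μ π V : ℝ) : EReal) ≤ ⨆ W : C(X, ℝ), ((dvF μ π W : ℝ) : EReal) := by
  have key : ∀ ε : ℝ, 0 < ε → ∃ W : C(X, ℝ), dvF μ π V - ε ≤ dvF μ π W := by
    intro ε hε
    set δ : ℝ := ε / (1 + Real.exp (2 * M)) with hδdef
    have hδ : 0 < δ := div_pos hε (by positivity)
    have hVi : Integrable V (μ + π) := integrable_of_bdd hm.aestronglyMeasurable hb
    obtain ⟨g, hg, hgi⟩ := hVi.exists_boundedContinuous_integral_sub_le hδ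
    set W : C(X, ℝ) := ⟨fun x => max (min (g x) M) (-M),
      ((map_continuous g).min continuous_const).max continuous_const⟩ with hWdef
    have hWb : ∀ x, |W x| ≤ M := by
      intro x
      rw [abs_le]
      exact ⟨le_max_right _ _, max_le (min_le_right _ _) (by linarith)⟩
    have hd : ∀ x, |W x - V x| ≤ ‖V x - g x‖ := by
      intro x
      rw [Real.norm_eq_abs, abs_sub_comm (V x)]
      exact clamp_abs_sub (hb x)
    have hViμ : Integrable V μ := hVi.mono_measure (Measure.le_add_right le_rfl)
    have hViπ : Integrable V π := hVi.mono_measure (Measure.le_add_left le_rfl)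
    have hWiμ : Integrable (fun x => W x) μ :=
      integrable_of_bdd W.continuous.aestronglyMeasurable hWb
    have hWiπ : Integrable (fun x => W x) π :=
      integrable_of_bdd W.continuous.aestronglyMeasurable hWb
    have hgiD : Integrable (fun x => ‖V x - g x‖) (μ + π) := (hVi.sub hgi).norm
    have hDμ : ∫ x, ‖V x - g x‖ ∂μ ≤ δ :=
      le_trans (integral_mono_measure (Measure.le_add_right le_rfl)
        (ae_of_all _ fun x => norm_nonneg _) hgiD) hg
    have hDπ : ∫ x, ‖V x - g x‖ ∂π ≤ δ :=
      le_trans (integral_mono_measure (Measure.le_add_left le_rfl)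
        (ae_of_all _ fun x => norm_nonneg _) hgiD) hg
    have h1 : |∫ x, V x ∂μ - ∫ x, W x ∂μ| ≤ δ := by
      rw [← integral_sub hViμ hWiμ]
      calc |∫ x, (V x - W x) ∂μ| ≤ ∫ x, |V x - W x| ∂μ := by
            simpa [Real.norm_eq_abs] using norm_integral_le_integral_norm (μ := μ) fun x => V x - W x
        _ ≤ ∫ x, ‖V x - g x‖ ∂μ := by
            refine integral_mono (hViμ.sub hWiμ).abs
              ((hgiD.mono_measure (Measure.le_add_right le_rfl))) fun x => ?_
            rw [abs_sub_comm]
            exact hd x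
        _ ≤ δ := hDμ
    have hexpV : Integrable (fun x => Real.exp (V x)) π :=
      integrable_exp_of_bdd hViπ.aestronglyMeasurable hb
    have hexpW : Integrable (fun x => Real.exp (W x)) π :=
      integrable_exp_of_bdd W.continuous.aestronglyMeasurable hWb
    have h2 : |(∫ x, Real.exp (V x) ∂π) - ∫ x, Real.exp (W x) ∂π| ≤ Real.exp M * δ := by
      rw [← integral_sub hexpV hexpW]
      calc |∫ x, (Real.exp (V x) - Real.exp (W x)) ∂π|
          ≤ ∫ x, |Real.exp (V x) - Real.exp (W x)| ∂π := by
            simpa [Real.norm_eq_abs] using norm_integral_le_integral_norm (μ := π)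
              fun x => Real.exp (V x) - Real.exp (W x)
        _ ≤ ∫ x, Real.exp M * ‖V x - g x‖ ∂π := by
            refine integral_mono (hexpV.sub hexpW).abs
              (((hgiD.mono_measure (Measure.le_add_left le_rfl))).const_mul _) fun x => ?_
            refine le_trans (exp_sub_exp_abs (abs_le.1 (hb x)).2 (abs_le.1 (hWb x)).2) ?_
            refine mul_le_mul_of_nonneg_left ?_ (Real.exp_pos M).le
            rw [abs_sub_comm]
            exact hd x
        _ = Real.exp M * ∫ x, ‖V x - g x‖ ∂π := integral_const_mul _ _
        _ ≤ Real.exp M * δ := mul_le_mul_of_nonneg_left hDπ (Real.exp_pos M).le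
    have ht : Real.exp (-M) ≤ ∫ x, Real.exp (V x) ∂π :=
      exp_int_ge π hViπ.aestronglyMeasurable hb
    have hs : Real.exp (-M) ≤ ∫ x, Real.exp (W x) ∂π :=
      exp_int_ge π W.continuous.aestronglyMeasurable hWb
    have hexpsq : Real.exp M * Real.exp M = Real.exp (2 * M) := by
      rw [← Real.exp_add]; ring_nf
    have h3 : |Real.log (∫ x, Real.exp (V x) ∂π) - Real.log (∫ x, Real.exp (W x) ∂π)|
        ≤ Real.exp (2 * M) * δ := by
      refine le_trans (log_sub_log_abs (Real.exp_pos _) ht hs) ?_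
      rw [Real.exp_neg, div_inv_eq_mul]
      calc |(∫ x, Real.exp (V x) ∂π) - ∫ x, Real.exp (W x) ∂π| * Real.exp M
          ≤ (Real.exp M * δ) * Real.exp M :=
            mul_le_mul_of_nonneg_right h2 (Real.exp_pos M).le
        _ = Real.exp (2 * M) * δ := by rw [← hexpsq]; ring
    refine ⟨W, ?_⟩
    have hδε : δ * (1 + Real.exp (2 * M)) = ε := by
      rw [hδdef]; field_simp
    have e1 := abs_le.1 h1
    have e3 := abs_le.1 h3
    simp only [dvF]
    nlinarith [e1.1, e1.2, e3.1, e3.2]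
  have seq : ∀ n : ℕ, ((dvF μ π V - 1 / (n + 1) : ℝ) : EReal)
      ≤ ⨆ W : C(X, ℝ), ((dvF μ π W : ℝ) : EReal) := by
    intro n
    obtain ⟨W, hW⟩ := key (1 / (n + 1)) (by positivity)
    exact le_trans (EReal.coe_le_coe_iff.2 hW)
      (le_iSup (fun W : C(X, ℝ) => ((dvF μ π W : ℝ) : EReal)) W)
  have htend : Tendsto (fun n : ℕ => ((dvF μ π V - 1 / (n + 1) : ℝ) : EReal)) atTop
      (nhds ((dvF μ π V : ℝ) : EReal)) := by
    rw [EReal.tendsto_coe]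
    simpa using (tendsto_const_nhds : Tendsto (fun _ : ℕ => dvF μ π V) atTop _).sub tendsto_one_div_add_atTop_nhds_zero_nat
  exact le_of_tendsto htend (Eventually.of_forall seq)

lemma EReal_eq_top_of_forall_coe_le {S : EReal} (h : ∀ r : ℝ, (r : EReal) ≤ S) : S = ⊤ := by
  induction S with
  | bot => simpa using h 0
  | coe s =>
      have := EReal.coe_le_coe_iff.1 (h (s + 1))
      linarith
  | top => rfl

lemma sup_eq_top_of_not_ac (h : ¬ μ ≪ π) :
    (⨆ W : C(X, ℝ), ((dvF μ π W : ℝ) : EReal)) = ⊤ := by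
  simp only [Measure.AbsolutelyContinuous] at h
  push_neg at h
  obtain ⟨s, hπs, hμs⟩ := h
  set A := toMeasurable π s with hAdef
  have hA : MeasurableSet A := measurableSet_toMeasurable π s
  have hπA : π A = 0 := by rw [hAdef, measure_toMeasurable]; exact hπs
  have hμA : μ A ≠ 0 := fun h0 =>
    hμs (le_antisymm (le_trans (measure_mono (subset_toMeasurable π s)) h0.le) zero_le)
  set a := (μ A).toReal with hadef
  have ha : 0 < a := ENNReal.toReal_pos hμA (measure_ne_top μ A)
  apply EReal_eq_top_of_forall_coe_le
  intro r
  obtain ⟨n, hn⟩ := exists_nat_ge (r / a)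
  have hra : r ≤ a * n := by
    rw [div_le_iff₀ ha] at hn
    linarith
  set V : X → ℝ := A.indicator (fun _ => (n : ℝ)) with hVdef
  have hVm : Measurable V := measurable_const.indicator hA
  have hVb : ∀ x, |V x| ≤ (n : ℝ) := by
    intro x
    by_cases hx : x ∈ A <;> simp [hVdef, hx]
  have hIV : ∫ x, V x ∂μ = a * n := by
    rw [hVdef, integral_indicator_const _ hA]
    simp [hadef, mul_comm, Measure.real]
  have hexpV : (fun x => Real.exp (V x))
      = fun x => A.indicator (fun _ => Real.exp n - 1) x + 1 := by
    funext x
    by_cases hx : x ∈ A <;> simp [hVdef, hx]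
  have hIE : ∫ x, Real.exp (V x) ∂π = 1 := by
    rw [hexpV, integral_add ((integrable_const _).indicator hA) (integrable_const _),
      integral_indicator_const _ hA]
    simp [hπA, Measure.real]
  have hdv : dvF μ π V = a * n := by
    rw [dvF, hIV, hIE, Real.log_one, sub_zero]
  calc (r : EReal) ≤ ((a * n : ℝ) : EReal) := EReal.coe_le_coe_iff.2 hra
    _ = ((dvF μ π V : ℝ) : EReal) := by rw [hdv]
    _ ≤ _ := coe_dvF_le_sup μ π hVm (Nat.cast_nonneg n) hVb

lemma mul_min_log_le_one {t : ℝ} (ht : 0 ≤ t) : |t * min (Real.log t) 0| ≤ 1 := by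
  rcases eq_or_lt_of_le ht with h0 | h0
  · simp [← h0]
  rcases le_total 1 t with h1 | h1
  · rw [min_eq_right (Real.log_nonneg h1)]
    simp
  · rw [min_eq_left (Real.log_nonpos ht h1)]
    rw [mul_comm]
    exact (Real.abs_log_mul_self_lt t h0 h1).le

lemma integrable_neg_part (hac : μ ≪ π) :
    Integrable (fun x => min (Real.log (μ.rnDeriv π x).toReal) 0) μ := by
  rw [← integrable_rnDeriv_smul_iff hac]
  refine integrable_of_bdd (Measurable.aestronglyMeasurable ?_) (C := 1) ?_
  · exact ((μ.measurable_rnDeriv π).ennreal_toReal).smul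
      (((Real.measurable_log.comp (μ.measurable_rnDeriv π).ennreal_toReal)).min
        measurable_const)
  · intro x
    simpa [smul_eq_mul] using mul_min_log_le_one (ENNReal.toReal_nonneg
      (a := μ.rnDeriv π x))

lemma exp_min_le (t v : ℝ) (ht : 0 ≤ t) :
    Real.exp (min (max (Real.log t) 0) v) ≤ t + 1 := by
  refine le_trans (Real.exp_le_exp.2 (min_le_left _ _)) ?_
  rcases le_total (Real.log t) 0 with h | h
  · rw [max_eq_right h]
    simp [Real.exp_zero]
    linarith
  · rw [max_eq_left h]
    rcases eq_or_lt_of_le ht with h0 | h0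
    · simp [← h0, Real.log_zero, Real.exp_zero]
    · rw [Real.exp_log h0]
      linarith

lemma sup_eq_top_of_not_int (hac : μ ≪ π)
    (hni : ¬ Integrable (fun x => Real.log (μ.rnDeriv π x).toReal) μ) :
    (⨆ W : C(X, ℝ), ((dvF μ π W : ℝ) : EReal)) = ⊤ := by
  set ψ : X → ℝ := fun x => (μ.rnDeriv π x).toReal with hψdef
  set L : X → ℝ := fun x => Real.log (ψ x) with hLdef
  set P : X → ℝ := fun x => max (L x) 0 with hPdef
  have hψm : Measurable ψ := (μ.measurable_rnDeriv π).ennreal_toReal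
  have hLm : Measurable L := Real.measurable_log.comp hψm
  have hPm : Measurable P := hLm.max measurable_const
  have hP0 : ∀ x, 0 ≤ P x := fun x => le_max_right _ _
  -- P is not integrable
  have hPni : ¬ Integrable P μ := by
    intro hP
    apply hni
    have hLeq : (fun x => Real.log (μ.rnDeriv π x).toReal)
        = fun x => P x + min (L x) 0 := by
      funext x
      simp only [hPdef, hLdef, hψdef]
      rcases le_total (Real.log (μ.rnDeriv π x).toReal) 0 with h | h
      · rw [max_eq_right h, min_eq_left h, zero_add]
      · rw [max_eq_left h, min_eq_right h, add_zero]
    have : Integrable (fun x => P x + min (L x) 0) μ :=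
      hP.add (integrable_neg_part μ π hac)
    refine this.congr (ae_of_all _ fun x => ?_)
    exact (congrFun hLeq x).symm
  -- lintegral of P is ⊤
  have htop : ∫⁻ x, ENNReal.ofReal (P x) ∂μ = ⊤ := by
    by_contra hfin
    exact hPni ⟨hPm.aestronglyMeasurable,
      (hasFiniteIntegral_iff_ofReal (ae_of_all _ hP0)).2 (lt_top_iff_ne_top.2 hfin)⟩
  -- monotone convergence
  have hkey := lintegral_iSup (μ := μ)
    (f := fun (n : ℕ) (x : X) => ENNReal.ofReal (min (P x) (n : ℝ)))
    (fun n => ENNReal.measurable_ofReal.comp (hPm.min measurable_const))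
    (fun m k hmk x => ENNReal.ofReal_le_ofReal
      (le_min (min_le_left _ _) (le_trans (min_le_right _ _) (Nat.cast_le.2 hmk))))
  have hptsup : ∀ x, (⨆ n : ℕ, ENNReal.ofReal (min (P x) (n : ℝ)))
      = ENNReal.ofReal (P x) := by
    intro x
    refine le_antisymm (iSup_le fun n => ENNReal.ofReal_le_ofReal (min_le_left _ _)) ?_
    obtain ⟨n, hn⟩ := exists_nat_ge (P x)
    exact le_iSup_of_le n (by rw [min_eq_left hn])
  have hsup : (⨆ n : ℕ, ∫⁻ x, ENNReal.ofReal (min (P x) (n : ℝ)) ∂μ) = ⊤ := by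
    have h2 : ∫⁻ x, ENNReal.ofReal (P x) ∂μ
        = ⨆ n : ℕ, ∫⁻ x, ENNReal.ofReal (min (P x) (n : ℝ)) ∂μ :=
      (lintegral_congr fun x => (hptsup x).symm).trans hkey
    rw [← h2, htop]
  apply EReal_eq_top_of_forall_coe_le
  intro r
  -- find n with large truncated integral
  have hC : ∃ n : ℕ, r + Real.log 2 ≤ ∫ x, min (P x) n ∂μ := by
    have : ENNReal.ofReal (r + Real.log 2) < ⨆ n : ℕ, ∫⁻ x, ENNReal.ofReal (min (P x) n) ∂μ := by
      rw [hsup]; exact ENNReal.ofReal_lt_top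
    obtain ⟨n, hn⟩ := lt_iSup_iff.1 this
    refine ⟨n, ?_⟩
    have hfin : ∫⁻ x, ENNReal.ofReal (min (P x) n) ∂μ ≠ ⊤ := by
      refine ne_of_lt (lt_of_le_of_lt (lintegral_mono fun x =>
        ENNReal.ofReal_le_ofReal (min_le_right _ _)) ?_)
      rw [lintegral_const]
      simp [ENNReal.ofReal_lt_top]
    rw [integral_eq_lintegral_of_nonneg_ae (ae_of_all _ fun x => le_min (hP0 x) (Nat.cast_nonneg n))
      (hPm.min measurable_const).aestronglyMeasurable]
    exact (ENNReal.ofReal_le_iff_le_toReal hfin).1 hn.le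
  obtain ⟨n, hn⟩ := hC
  set V : X → ℝ := fun x => min (P x) n with hVdef
  have hVm : Measurable V := hPm.min measurable_const
  have hVb : ∀ x, |V x| ≤ (n : ℝ) := fun x => abs_le.2
    ⟨le_trans (by norm_num) (le_min (hP0 x) (Nat.cast_nonneg n)), min_le_right _ _⟩
  -- ∫ exp V dπ ≤ 2
  have hψi : Integrable ψ π := Measure.integrable_toReal_rnDeriv
  have hψint : ∫ x, ψ x ∂π = 1 := by
    rw [hψdef, Measure.integral_toReal_rnDeriv hac]
    simp
  have hexpVi : Integrable (fun x => Real.exp (V x)) π :=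
    integrable_exp_of_bdd hVm.aestronglyMeasurable hVb
  have hIE : ∫ x, Real.exp (V x) ∂π ≤ 2 := by
    have hptw : ∀ x, Real.exp (V x) ≤ ψ x + 1 := fun x =>
      exp_min_le (ψ x) n (ENNReal.toReal_nonneg)
    calc ∫ x, Real.exp (V x) ∂π ≤ ∫ x, (ψ x + 1) ∂π :=
          integral_mono hexpVi (hψi.add (integrable_const 1)) hptw
      _ = 2 := by
          rw [integral_add hψi (integrable_const 1), hψint]
          simp
          norm_num
  have hIEpos : 0 < ∫ x, Real.exp (V x) ∂π :=
    lt_of_lt_of_le (Real.exp_pos _) (exp_int_ge π hVm.aestronglyMeasurable hVb)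
  have hdv : r ≤ dvF μ π V := by
    rw [dvF]
    have hlog : Real.log (∫ x, Real.exp (V x) ∂π) ≤ Real.log 2 :=
      Real.log_le_log hIEpos hIE
    linarith
  calc (r : EReal) ≤ ((dvF μ π V : ℝ) : EReal) := EReal.coe_le_coe_iff.2 hdv
    _ ≤ _ := coe_dvF_le_sup μ π hVm (Nat.cast_nonneg n) hVb

lemma t_mul_exp_sub_log_le (t v : ℝ) (ht : 0 ≤ t) :
    t * Real.exp (v - Real.log t) ≤ Real.exp v := by
  rcases eq_or_lt_of_le ht with h0 | h0
  · rw [← h0, zero_mul]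
    exact (Real.exp_pos v).le
  · rw [Real.exp_sub, Real.exp_log h0, mul_comm, div_mul_cancel₀ _ h0.ne']

lemma dvF_le_int (hac : μ ≪ π)
    (hInt : Integrable (fun x => Real.log (μ.rnDeriv π x).toReal) μ)
    (V : C(X, ℝ)) :
    dvF μ π (fun x => V x) ≤ ∫ x, Real.log (μ.rnDeriv π x).toReal ∂μ := by
  set ψ : X → ℝ := fun x => (μ.rnDeriv π x).toReal with hψdef
  set L : X → ℝ := fun x => Real.log (ψ x) with hLdef
  have hψm : Measurable ψ := (μ.measurable_rnDeriv π).ennreal_toReal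
  have hLm : Measurable L := Real.measurable_log.comp hψm
  obtain ⟨C, hC⟩ := isCompact_univ.exists_bound_of_continuousOn V.continuous.continuousOn
  have hC' : ∀ x, |V x| ≤ C := fun x => by
    simpa [Real.norm_eq_abs] using hC x (Set.mem_univ x)
  have hVi : Integrable (fun x => V x) μ :=
    integrable_of_bdd V.continuous.aestronglyMeasurable hC'
  set h : X → ℝ := fun x => V x - L x with hhdef
  have hhi : Integrable h μ := hVi.sub hInt
  have hmeas : Measurable fun x => ψ x • Real.exp (h x) :=
    hψm.smul (Real.measurable_exp.comp (V.continuous.measurable.sub hLm))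
  have hbd : ∀ x, |ψ x * Real.exp (h x)| ≤ Real.exp C := by
    intro x
    rw [abs_of_nonneg (mul_nonneg ENNReal.toReal_nonneg (Real.exp_pos _).le)]
    exact le_trans (t_mul_exp_sub_log_le (ψ x) (V x) ENNReal.toReal_nonneg)
      (Real.exp_le_exp.2 (abs_le.1 (hC' x)).2)
  have hgi : Integrable (fun x => ψ x • Real.exp (h x)) π :=
    integrable_of_bdd hmeas.aestronglyMeasurable (by simpa [smul_eq_mul] using hbd)
  have hexphi : Integrable (fun x => Real.exp (h x)) μ :=
    (integrable_rnDeriv_smul_iff hac).1 hgi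
  have hJ : Real.exp (∫ x, h x ∂μ) ≤ ∫ x, Real.exp (h x) ∂μ :=
    convexOn_exp.map_integral_le Real.continuous_exp.continuousOn isClosed_univ
      (ae_of_all _ fun x => Set.mem_univ _) hhi hexphi
  have hchg : ∫ x, Real.exp (h x) ∂μ = ∫ x, ψ x • Real.exp (h x) ∂π :=
    (integral_rnDeriv_smul hac).symm
  have hexpVi : Integrable (fun x => Real.exp (V x)) π :=
    integrable_exp_of_bdd V.continuous.aestronglyMeasurable hC'
  have hle : ∫ x, ψ x • Real.exp (h x) ∂π ≤ ∫ x, Real.exp (V x) ∂π := by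
    refine integral_mono hgi hexpVi fun x => ?_
    simpa [smul_eq_mul] using t_mul_exp_sub_log_le (ψ x) (V x) ENNReal.toReal_nonneg
  have hpos : 0 < ∫ x, Real.exp (V x) ∂π :=
    lt_of_lt_of_le (Real.exp_pos _) (exp_int_ge π V.continuous.aestronglyMeasurable hC')
  have hsub : ∫ x, h x ∂μ = (∫ x, V x ∂μ) - ∫ x, L x ∂μ := integral_sub hVi hInt
  have hfinal : Real.exp ((∫ x, V x ∂μ) - ∫ x, L x ∂μ) ≤ ∫ x, Real.exp (V x) ∂π := by
    rw [← hsub]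
    exact le_trans hJ (le_trans (le_of_eq hchg) hle)
  have := (Real.le_log_iff_exp_le hpos).2 hfinal
  rw [dvF]
  linarith

lemma log_clamp {t : ℝ} (ht : 0 < t) {n : ℝ} (hn : 0 ≤ n) :
    Real.log (max (min t (Real.exp n)) (Real.exp (-n)))
      = max (min (Real.log t) n) (-n) := by
  rcases le_total t (Real.exp n) with h1 | h1
  · rw [min_eq_left h1, min_eq_left ((Real.log_le_iff_le_exp ht).2 h1)]
    rcases le_total (Real.exp (-n)) t with h2 | h2
    · rw [max_eq_left h2, max_eq_left (by
        rw [← Real.log_exp (-n)]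
        exact Real.log_le_log (Real.exp_pos _) h2)]
    · rw [max_eq_right h2, max_eq_right ((Real.log_le_iff_le_exp ht).2 h2), Real.log_exp]
  · rw [min_eq_right h1, min_eq_right (by
      rw [← Real.log_exp n]
      exact Real.log_le_log (Real.exp_pos _) h1)]
    rw [max_eq_left (Real.exp_le_exp.2 (by linarith)), max_eq_left (by linarith),
      Real.log_exp]

lemma int_le_sup (hac : μ ≪ π)
    (hInt : Integrable (fun x => Real.log (μ.rnDeriv π x).toReal) μ) :
    ((∫ x, Real.log (μ.rnDeriv π x).toReal ∂μ : ℝ) : EReal)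
      ≤ ⨆ W : C(X, ℝ), ((dvF μ π W : ℝ) : EReal) := by
  set ψ : X → ℝ := fun x => (μ.rnDeriv π x).toReal with hψdef
  set L : X → ℝ := fun x => Real.log (ψ x) with hLdef
  have hψm : Measurable ψ := (μ.measurable_rnDeriv π).ennreal_toReal
  have hLm : Measurable L := Real.measurable_log.comp hψm
  set W : ℕ → X → ℝ := fun n x =>
    Real.log (max (min (ψ x) (Real.exp n)) (Real.exp (-(n : ℝ)))) with hWdef
  have hWm : ∀ n, Measurable (W n) := fun n =>
    Real.measurable_log.comp ((hψm.min measurable_const).max measurable_const)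
  have hclamp_pos : ∀ (n : ℕ) x, 0 < max (min (ψ x) (Real.exp n)) (Real.exp (-(n : ℝ))) :=
    fun n x => lt_of_lt_of_le (Real.exp_pos _) (le_max_right _ _)
  have hWb : ∀ n, ∀ x, |W n x| ≤ (n : ℝ) := by
    intro n x
    rw [abs_le]
    constructor
    · calc -(n : ℝ) = Real.log (Real.exp (-(n : ℝ))) := (Real.log_exp _).symm
        _ ≤ W n x := Real.log_le_log (Real.exp_pos _) (le_max_right _ _)
    · calc W n x ≤ Real.log (Real.exp (n : ℝ)) :=
            Real.log_le_log (hclamp_pos n x) (max_le (min_le_right _ _)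
              (Real.exp_le_exp.2 (neg_le_self (Nat.cast_nonneg n))))
        _ = (n : ℝ) := Real.log_exp _
  have hexpW : ∀ (n : ℕ) x, Real.exp (W n x)
      = max (min (ψ x) (Real.exp n)) (Real.exp (-(n : ℝ))) :=
    fun n x => Real.exp_log (hclamp_pos n x)
  have hψ0 : ∀ x, 0 ≤ ψ x := fun x => ENNReal.toReal_nonneg
  have hexpWle : ∀ (n : ℕ) x, Real.exp (W n x) ≤ ψ x + Real.exp (-(n : ℝ)) := by
    intro n x
    rw [hexpW]
    exact max_le (le_trans (min_le_left _ _) (by linarith [Real.exp_pos (-(n : ℝ))]))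
      (by linarith [hψ0 x])
  have hψi : Integrable ψ π := Measure.integrable_toReal_rnDeriv
  have hψint : ∫ x, ψ x ∂π = 1 := by
    rw [hψdef, Measure.integral_toReal_rnDeriv hac]
    simp
  have hexpWi : ∀ n, Integrable (fun x => Real.exp (W n x)) π := fun n =>
    integrable_exp_of_bdd (hWm n).aestronglyMeasurable (hWb n)
  have hIEn : ∀ n, ∫ x, Real.exp (W n x) ∂π ≤ 1 + Real.exp (-(n : ℝ)) := by
    intro n
    calc ∫ x, Real.exp (W n x) ∂π ≤ ∫ x, (ψ x + Real.exp (-(n : ℝ))) ∂π :=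
          integral_mono (hexpWi n) (hψi.add (integrable_const _)) (hexpWle n)
      _ = 1 + Real.exp (-(n : ℝ)) := by
          rw [integral_add hψi (integrable_const _), hψint, integral_const]
          simp
  have hIEpos : ∀ n, 0 < ∫ x, Real.exp (W n x) ∂π := fun n =>
    lt_of_lt_of_le (Real.exp_pos _) (exp_int_ge π (hWm n).aestronglyMeasurable (hWb n))
  have hae_pos : ∀ᵐ x ∂μ, 0 < ψ x := by
    have h1 : ∀ᵐ x ∂μ, 0 < μ.rnDeriv π x := Measure.rnDeriv_pos hac
    have h2 : ∀ᵐ x ∂μ, μ.rnDeriv π x < ⊤ :=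
      (Measure.rnDeriv_lt_top μ π).filter_mono hac.ae_le
    filter_upwards [h1, h2] with x hx1 hx2
    exact ENNReal.toReal_pos hx1.ne' hx2.ne
  have hWeq : ∀ (n : ℕ) x, 0 < ψ x → W n x = max (min (L x) (n : ℝ)) (-(n : ℝ)) :=
    fun n x hx => log_clamp hx (Nat.cast_nonneg n)
  have htendW : ∀ᵐ x ∂μ, Tendsto (fun n => W n x) atTop (nhds (L x)) := by
    filter_upwards [hae_pos] with x hx
    refine Tendsto.congr' ?_ tendsto_const_nhds
    obtain ⟨N, hN⟩ := exists_nat_ge |L x|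
    filter_upwards [eventually_ge_atTop N] with n hn
    have hnL : |L x| ≤ (n : ℝ) := le_trans hN (Nat.cast_le.2 hn)
    rw [abs_le] at hnL
    rw [hWeq n x hx, min_eq_left hnL.2, max_eq_left hnL.1]
  have hWbound : ∀ n, ∀ᵐ x ∂μ, ‖W n x‖ ≤ |L x| := by
    intro n
    filter_upwards [hae_pos] with x hx
    rw [Real.norm_eq_abs, hWeq n x hx]
    have := clamp_abs_sub (a := L x) (b := 0) (M := (n : ℝ)) (by simp)
    simpa using this
  have htendI : Tendsto (fun n : ℕ => ∫ x, W n x ∂μ) atTop (nhds (∫ x, L x ∂μ)) :=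
    tendsto_integral_of_dominated_convergence (fun x => |L x|)
      (fun n => (hWm n).aestronglyMeasurable) hInt.abs hWbound htendW
  have htendlog : Tendsto (fun n : ℕ => Real.log (1 + Real.exp (-(n : ℝ)))) atTop
      (nhds 0) := by
    have h1 : Tendsto (fun n : ℕ => Real.exp (-(n : ℝ))) atTop (nhds 0) :=
      Real.tendsto_exp_neg_atTop_nhds_zero.comp tendsto_natCast_atTop_atTop
    have h2 : Tendsto (fun n : ℕ => 1 + Real.exp (-(n : ℝ))) atTop (nhds 1) := by
      simpa using tendsto_const_nhds.add h1
    have h3 := (Real.continuousAt_log one_ne_zero).tendsto.comp h2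
    simpa [Function.comp_def] using h3
  have hst : Tendsto (fun n : ℕ =>
      (∫ x, W n x ∂μ) - Real.log (1 + Real.exp (-(n : ℝ)))) atTop
      (nhds (∫ x, L x ∂μ)) := by
    simpa using htendI.sub htendlog
  refine le_of_tendsto (EReal.tendsto_coe.2 hst) (Eventually.of_forall fun n => ?_)
  have h1 : (∫ x, W n x ∂μ) - Real.log (1 + Real.exp (-(n : ℝ))) ≤ dvF μ π (W n) := by
    rw [dvF]
    have := Real.log_le_log (hIEpos n) (hIEn n)
    linarith
  exact le_trans (EReal.coe_le_coe_iff.2 h1)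
    (coe_dvF_le_sup μ π (hWm n) (Nat.cast_nonneg n) (hWb n))

end C

/-- the relative entropy
`H(μ,π) = sup_{V ∈ C(X)} (∫ V dμ - log ∫ e^V dπ)` is finite iff `μ ≪ π` and
`log ψ ∈ L¹(μ)` for `ψ = dμ/dπ`, in which case
`H(μ,π) = ∫ log ψ dμ = ∫ ψ log ψ dπ`. -/
theorem stmt_6 {X : Type*} [MetricSpace X] [CompactSpace X]
    [MeasurableSpace X] [BorelSpace X]
    (μ π : Measure X) [IsProbabilityMeasure μ] [IsProbabilityMeasure π]
    (H : EReal)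
    (hH : H = ⨆ V : C(X, ℝ),
      (((∫ x, V x ∂μ) - Real.log (∫ x, Real.exp (V x) ∂π) : ℝ) : EReal)) :
    (H ≠ ⊤ ↔ μ ≪ π ∧ Integrable (fun x => Real.log (μ.rnDeriv π x).toReal) μ)
    ∧ (μ ≪ π → Integrable (fun x => Real.log (μ.rnDeriv π x).toReal) μ →
        H = ((∫ x, Real.log (μ.rnDeriv π x).toReal ∂μ : ℝ) : EReal)
        ∧ ∫ x, Real.log (μ.rnDeriv π x).toReal ∂μ
            = ∫ x, (μ.rnDeriv π x).toReal * Real.log (μ.rnDeriv π x).toReal ∂π) := by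
  have hS : H = ⨆ W : C(X, ℝ), ((dvF μ π (fun x => W x) : ℝ) : EReal) := hH
  have hmain : μ ≪ π → Integrable (fun x => Real.log (μ.rnDeriv π x).toReal) μ →
      H = ((∫ x, Real.log (μ.rnDeriv π x).toReal ∂μ : ℝ) : EReal) := by
    intro hac hint
    rw [hS]
    exact le_antisymm (iSup_le fun V => EReal.coe_le_coe_iff.2 (dvF_le_int μ π hac hint V))
      (int_le_sup μ π hac hint)
  refine ⟨⟨fun hne => ?_, fun hh => ?_⟩, fun hac hint => ⟨hmain hac hint, ?_⟩⟩
  · by_cases hac : μ ≪ π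
    · refine ⟨hac, ?_⟩
      by_contra hni
      exact hne (hS.trans (sup_eq_top_of_not_int μ π hac hni))
    · exact absurd (hS.trans (sup_eq_top_of_not_ac μ π hac)) hne
  · rw [hmain hh.1 hh.2]
    exact EReal.coe_ne_top _
  · have hchg := integral_rnDeriv_smul (μ := μ) (ν := π) hac
      (f := fun x => Real.log (μ.rnDeriv π x).toReal)
    rw [← hchg]
    simp only [smul_eq_mul]
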